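/- Let r, T > 0, let n be a positive integer, let L₀ : C([−r, 0]; ℝⁿ) → ℝⁿ be a continuous linear map, and let η ∈ C([−r, 0]; ℝⁿ). Let X = { ψ ∈ C([0, T]; ℝⁿ) : ψ(0) = 0 } and Y = { v ∈ C([−r, T]; ℝⁿ) : v(θ) = η(θ) for all θ ∈ [−r, 0] }. Define 𝔅_η : X → Y by sending ψ to the unique v ∈ Y satisfying v(t) = η(0) + ∫₀ᵗ L₀(Π_s v) ds + ψ(t) for t ∈ [0, T]. Then 𝔅_η is a bijection from X onto Y, and its inverse is given by (𝔅_η⁻¹ v)(t) = v(t) − η(0) − ∫₀ᵗ L₀(Π_s v) ds for t ∈ [0, T]. -/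

import Mathlib

/-- The segment extractor for functions defined on `[-r, T]`: for `v : C([-r,T], E)`,
`s ∈ [0, T]` and `θ ∈ [-r, 0]`, `(segI r T h v s) θ = v (s + θ)` (points outside
`[-r, T]` are clamped via `Set.projIcc`; when `s ∈ [0,T]` one has `s + θ ∈ [-r,T]`,
so no clamping actually occurs there). -/
noncomputable def segI {E : Type*} [TopologicalSpace E] (r T : ℝ) (h : -r ≤ T)
    (v : C(Set.Icc (-r) T, E)) (s : ℝ) : C(Set.Icc (-r) (0 : ℝ), E) :=
  v.comp ⟨fun θ => Set.projIcc (-r) T h (s + θ.1),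
    (continuous_projIcc.comp (continuous_const.add continuous_subtype_val))⟩

lemma segI_apply {E : Type*} [TopologicalSpace E] (r T : ℝ) (h : -r ≤ T)
    (v : C(Set.Icc (-r) T, E)) (s : ℝ) (θ : Set.Icc (-r) (0:ℝ)) :
    segI r T h v s θ = v (Set.projIcc (-r) T h (s + θ.1)) := rfl

lemma segI_sub {E : Type*} [NormedAddCommGroup E] (r T : ℝ) (h : -r ≤ T)
    (u v : C(Set.Icc (-r) T, E)) (s : ℝ) :
    segI r T h (u - v) s = segI r T h u s - segI r T h v s := by
  ext θ; simp [segI_apply]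

lemma continuous_segI {E : Type*} [TopologicalSpace E] (r T : ℝ) (h : -r ≤ T)
    (v : C(Set.Icc (-r) T, E)) : Continuous (fun s => segI r T h v s) := by
  have := (ContinuousMap.curry
    (v.comp ⟨fun p : ℝ × Set.Icc (-r) (0:ℝ) => Set.projIcc (-r) T h (p.1 + p.2.1),
      continuous_projIcc.comp (continuous_fst.add (continuous_subtype_val.comp continuous_snd))⟩)).continuous
  convert this using 2
  ext θ; rfl

lemma key_uniq {E : Type*} [NormedAddCommGroup E] [NormedSpace ℝ E] [CompleteSpace E]
    (r T : ℝ) (hr : 0 < r) (hT : 0 < T) (h : -r ≤ T)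
    (L₀ : C(Set.Icc (-r) (0 : ℝ), E) →L[ℝ] E)
    (w : C(Set.Icc (-r) T, E))
    (h0 : ∀ x : Set.Icc (-r) T, x.1 ≤ 0 → w x = 0)
    (heq : ∀ x : Set.Icc (-r) T, 0 ≤ x.1 →
      w x = ∫ s in (0:ℝ)..x.1, L₀ (segI r T h w s)) :
    w = 0 := by
  set C := ‖L₀‖ with hC
  have hC0 : 0 ≤ C := by rw [hC]; exact norm_nonneg L₀
  set M := ‖w‖ with hM
  have hM0 : 0 ≤ M := by rw [hM]; exact norm_nonneg _
  have hcont : Continuous fun s => L₀ (segI r T h w s) :=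
    L₀.continuous.comp (continuous_segI r T h w)
  have main : ∀ k : ℕ, ∀ x : Set.Icc (-r) T, 0 ≤ x.1 →
      ‖w x‖ ≤ M * ((C * x.1) ^ k / (Nat.factorial k)) := by
    intro k
    induction k with
    | zero =>
      intro x hx
      simpa using w.norm_coe_le_norm x
    | succ k ih =>
      intro x hx
      have hseg : ∀ s ∈ Set.Icc (0:ℝ) x.1, ‖segI r T h w s‖ ≤ M * ((C * s) ^ k / (Nat.factorial k)) := by
        intro s hs
        have hsnn : 0 ≤ s := hs.1
        have hsT : s ≤ T := le_trans hs.2 x.2.2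
        refine (ContinuousMap.norm_le _ (by positivity)).2 ?_
        intro θ
        have hmem : s + θ.1 ∈ Set.Icc (-r) T :=
          ⟨by have := θ.2.1; linarith, by have := θ.2.2; linarith⟩
        rw [segI_apply, Set.projIcc_of_mem h hmem]
        rcases le_or_gt (s + θ.1) 0 with hle | hpos
        · rw [h0 _ hle]; simp; positivity
        · refine (ih ⟨s + θ.1, hmem⟩ hpos.le).trans ?_
          have hθ : θ.1 ≤ 0 := θ.2.2
          gcongr M * (?_ ^ k / _)
          show C * (s + θ.1) ≤ C * s
          have hss : s + θ.1 ≤ s := by linarith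
          exact mul_le_mul_of_nonneg_left hss hC0
      have hint1 : IntervalIntegrable (fun s => ‖L₀ (segI r T h w s)‖) MeasureTheory.volume 0 x.1 :=
        (hcont.norm).intervalIntegrable _ _
      have hint2 : IntervalIntegrable (fun s => C * (M * ((C * s) ^ k / (Nat.factorial k)))) MeasureTheory.volume 0 x.1 := by
        apply Continuous.intervalIntegrable; fun_prop
      calc ‖w x‖ = ‖∫ s in (0:ℝ)..x.1, L₀ (segI r T h w s)‖ := by rw [heq x hx]
        _ ≤ ∫ s in (0:ℝ)..x.1, ‖L₀ (segI r T h w s)‖ :=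
            intervalIntegral.norm_integral_le_integral_norm hx
        _ ≤ ∫ s in (0:ℝ)..x.1, C * (M * ((C * s) ^ k / (Nat.factorial k))) := by
            apply intervalIntegral.integral_mono_on hx hint1 hint2
            intro s hs
            exact (L₀.le_opNorm _).trans (by
              have := hseg s hs
              gcongr)
        _ = (C * M * C ^ k / (Nat.factorial k)) * ∫ s in (0:ℝ)..x.1, s ^ k := by
            rw [← intervalIntegral.integral_const_mul]
            congr 1; ext s; rw [mul_pow]; ring
        _ = M * ((C * x.1) ^ (k+1) / (Nat.factorial (k+1))) := by
            rw [integral_pow]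
            have hk : (Nat.factorial k : ℝ) ≠ 0 := Nat.cast_ne_zero.2 (Nat.factorial_ne_zero k)
            rw [Nat.factorial_succ]
            push_cast
            field_simp
            ring
  ext x
  rcases le_or_gt x.1 0 with hle | hpos
  · simpa using h0 x hle
  · have hlim : Filter.Tendsto (fun k : ℕ => M * ((C * x.1) ^ k / (Nat.factorial k)))
        Filter.atTop (nhds (M * 0)) :=
      (FloorSemiring.tendsto_pow_div_factorial_atTop (C * x.1)).const_mul M
    rw [mul_zero] at hlim
    have : ‖w x‖ ≤ 0 := ge_of_tendsto' hlim (fun k => main k x hpos.le)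
    simpa using norm_le_zero_iff.1 this

/-- the solution map `𝔅_η`, sending a forcing path `ψ ∈ X = {ψ ∈ C([0,T];ℝⁿ) :
ψ(0) = 0}` to the solution `v ∈ Y = {v ∈ C([-r,T];ℝⁿ) : v = η on [-r,0]}` of the linear
delay integral equation, is a bijection from `X` onto `Y`, and its inverse is
`(𝔅_η⁻¹ v)(t) = v(t) - η(0) - ∫₀ᵗ L₀(Π_s v) ds`. -/
theorem stmt_5 (n : ℕ) (hn : 0 < n) (r T : ℝ) (hr : 0 < r) (hT : 0 < T)
    (L₀ : C(Set.Icc (-r) (0 : ℝ), EuclideanSpace ℝ (Fin n)) →L[ℝ] EuclideanSpace ℝ (Fin n))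
    (η : C(Set.Icc (-r) (0 : ℝ), EuclideanSpace ℝ (Fin n)))
    (B : {ψ : C(Set.Icc (0 : ℝ) T, EuclideanSpace ℝ (Fin n)) // ψ ⟨0, ⟨le_rfl, hT.le⟩⟩ = 0} →
         {v : C(Set.Icc (-r) T, EuclideanSpace ℝ (Fin n)) //
           ∀ θ : Set.Icc (-r) (0 : ℝ), v ⟨θ.1, ⟨θ.2.1, θ.2.2.trans hT.le⟩⟩ = η θ})
    (hB : ∀ ψ, ∀ t : ℝ, ∀ ht : t ∈ Set.Icc (0 : ℝ) T,
      (B ψ).1 ⟨t, ⟨le_trans (by linarith : -r ≤ 0) ht.1, ht.2⟩⟩ =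
        η ⟨0, ⟨by linarith, le_rfl⟩⟩ +
        (∫ s in (0 : ℝ)..t, L₀ (segI r T (by linarith) (B ψ).1 s)) + ψ.1 ⟨t, ht⟩) :
    Function.Bijective B ∧
    ∀ ψ, ∀ v, B ψ = v → ∀ t : ℝ, ∀ ht : t ∈ Set.Icc (0 : ℝ) T,
      ψ.1 ⟨t, ht⟩ =
        v.1 ⟨t, ⟨le_trans (by linarith : -r ≤ 0) ht.1, ht.2⟩⟩ - η ⟨0, ⟨by linarith, le_rfl⟩⟩ -
        ∫ s in (0 : ℝ)..t, L₀ (segI r T (by linarith) v.1 s) := by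
  have h : -r ≤ T := by linarith
  have hr0 : -r ≤ 0 := by linarith
  -- the inverse formula (third conclusion), proved first
  have inv_formula : ∀ ψ, ∀ v, B ψ = v → ∀ t : ℝ, ∀ ht : t ∈ Set.Icc (0 : ℝ) T,
      ψ.1 ⟨t, ht⟩ =
        v.1 ⟨t, ⟨le_trans hr0 ht.1, ht.2⟩⟩ - η ⟨0, ⟨by linarith, le_rfl⟩⟩ -
        ∫ s in (0 : ℝ)..t, L₀ (segI r T h v.1 s) := by
    intro ψ v hv t ht
    subst hv
    rw [hB ψ t ht]
    abel
  refine ⟨⟨?_, ?_⟩, fun ψ v hv t ht => inv_formula ψ v hv t ht⟩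
  · -- injective
    intro ψ₁ ψ₂ hBeq
    apply Subtype.ext
    apply ContinuousMap.ext
    intro x
    have h1 := inv_formula ψ₁ (B ψ₁) rfl x.1 x.2
    have h2 := inv_formula ψ₂ (B ψ₂) rfl x.1 x.2
    rw [hBeq] at h1
    exact h1.trans h2.symm
  · -- surjective
    intro v
    have hcv : Continuous fun s => L₀ (segI r T h v.1 s) :=
      L₀.continuous.comp (continuous_segI r T h v.1)
    have hIcont : Continuous fun t : ℝ => ∫ s in (0:ℝ)..t, L₀ (segI r T h v.1 s) :=
      intervalIntegral.continuous_primitive (fun a b => hcv.intervalIntegrable a b) 0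
    have hincl : Continuous fun t : Set.Icc (0:ℝ) T =>
        (⟨t.1, ⟨le_trans hr0 t.2.1, t.2.2⟩⟩ : Set.Icc (-r) T) :=
      Continuous.subtype_mk continuous_subtype_val _
    set g : C(Set.Icc (0:ℝ) T, EuclideanSpace ℝ (Fin n)) :=
      ⟨fun t => v.1 ⟨t.1, ⟨le_trans hr0 t.2.1, t.2.2⟩⟩ - η ⟨0, ⟨hr0, le_rfl⟩⟩ -
          ∫ s in (0:ℝ)..t.1, L₀ (segI r T h v.1 s),
        ((v.1.continuous.comp hincl).sub continuous_const).sub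
          (hIcont.comp continuous_subtype_val)⟩ with hg
    have g0 : g ⟨0, ⟨le_rfl, hT.le⟩⟩ = 0 := by
      show v.1 ⟨0, _⟩ - η ⟨0, ⟨hr0, le_rfl⟩⟩ - (∫ s in (0:ℝ)..(0:ℝ), L₀ (segI r T h v.1 s)) = 0
      rw [intervalIntegral.integral_same, sub_zero, sub_eq_zero]
      exact v.2 ⟨0, ⟨hr0, le_rfl⟩⟩
    set ψ : {ψ : C(Set.Icc (0 : ℝ) T, EuclideanSpace ℝ (Fin n)) // ψ ⟨0, ⟨le_rfl, hT.le⟩⟩ = 0} :=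
      ⟨g, g0⟩ with hψ
    set u := B ψ with hu
    set w : C(Set.Icc (-r) T, EuclideanSpace ℝ (Fin n)) := u.1 - v.1 with hw
    have hcu : Continuous fun s => L₀ (segI r T h u.1 s) :=
      L₀.continuous.comp (continuous_segI r T h u.1)
    have h0 : ∀ x : Set.Icc (-r) T, x.1 ≤ 0 → w x = 0 := by
      intro x hx
      show u.1 x - v.1 x = 0
      rw [sub_eq_zero]
      have hu2 : u.1 x = η ⟨x.1, ⟨x.2.1, hx⟩⟩ := u.2 ⟨x.1, ⟨x.2.1, hx⟩⟩
      have hv2 : v.1 x = η ⟨x.1, ⟨x.2.1, hx⟩⟩ := v.2 ⟨x.1, ⟨x.2.1, hx⟩⟩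
      rw [hu2, hv2]
    have heq : ∀ x : Set.Icc (-r) T, 0 ≤ x.1 →
        w x = ∫ s in (0:ℝ)..x.1, L₀ (segI r T h w s) := by
      intro x hx
      have ht : x.1 ∈ Set.Icc (0:ℝ) T := ⟨hx, x.2.2⟩
      have hBx : u.1 x = η ⟨0, ⟨by linarith, le_rfl⟩⟩ +
          (∫ s in (0:ℝ)..x.1, L₀ (segI r T h u.1 s)) + ψ.1 ⟨x.1, ht⟩ := hB ψ x.1 ht
      have hψx : ψ.1 ⟨x.1, ht⟩ = v.1 x - η ⟨0, ⟨hr0, le_rfl⟩⟩ -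
          ∫ s in (0:ℝ)..x.1, L₀ (segI r T h v.1 s) := rfl
      have step : w x = (∫ s in (0:ℝ)..x.1, L₀ (segI r T h u.1 s)) -
          ∫ s in (0:ℝ)..x.1, L₀ (segI r T h v.1 s) := by
        show u.1 x - v.1 x = _
        rw [hBx, hψx]
        abel
      rw [step, ← intervalIntegral.integral_sub (hcu.intervalIntegrable _ _)
        (hcv.intervalIntegrable _ _)]
      congr 1
      ext s
      rw [hw, segI_sub, map_sub]
    have hw0 : w = 0 := key_uniq r T hr hT h L₀ w h0 heq
    refine ⟨ψ, Subtype.ext ?_⟩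
    have : u.1 - v.1 = 0 := hw0
    rw [← hu]
    exact sub_eq_zero.1 this
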